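/- Let f̄ be a Borel probability measure on ℝ × ℝ (phase θ, frequency ω) whose frequency marginal has compact support. If ∫ e^{iθ} ω^k df̄(θ,ω) = 0 for every k ∈ ℕ, then ∫ e^{i(θ + ωt)} df̄(θ,ω) = 0 for every t ∈ ℝ; i.e. the free flow (the solution of the Kuramoto equation with this density as initial datum) has order parameter R(t) = 0 for all times, so f̄ evolves as an incoherent state. -/

import Mathlib

open MeasureTheory Filter Real

/-- Let `f̄` be a Borel probability measure on phase–frequency space `ℝ × ℝ` whose
frequency marginal has compact support. If `∫ e^{iθ} ω^k df̄ = 0` for every `k ∈ ℕ`,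
then `∫ e^{i(θ+ωt)} df̄ = 0` for every `t`: the free flow of `f̄` has order parameter
`R(t) = 0` for all times, i.e. `f̄` evolves as an incoherent state. -/
theorem free_flow_incoherent_of_vanishing_moments
    (fbar : Measure (ℝ × ℝ)) [IsProbabilityMeasure fbar]
    (M : ℝ) (hsupp : (Measure.map Prod.snd fbar) (Set.Icc (-M) M)ᶜ = 0)
    (hmom : ∀ k : ℕ,
      ∫ p : ℝ × ℝ, Complex.exp (Complex.I * (p.1 : ℂ)) * (p.2 : ℂ) ^ k ∂fbar = 0) :
    ∀ t : ℝ,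
      ∫ p : ℝ × ℝ, Complex.exp (Complex.I * ((p.1 + p.2 * t : ℝ) : ℂ)) ∂fbar = 0 := by
  intro t
  -- a.e. bound on the frequency
  have hae : ∀ᵐ p : ℝ × ℝ ∂fbar, |p.2| ≤ M := by
    have hm : MeasurableSet ((Set.Icc (-M) M)ᶜ : Set ℝ) := measurableSet_Icc.compl
    rw [Measure.map_apply measurable_snd hm] at hsupp
    have h0 : fbar {p : ℝ × ℝ | ¬ |p.2| ≤ M} = 0 := by
      refine measure_mono_null ?_ hsupp
      intro p hp
      simp only [Set.mem_setOf_eq] at hp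
      simp only [Set.mem_preimage, Set.mem_compl_iff, Set.mem_Icc]
      intro hmem
      exact hp (abs_le.mpr hmem)
    exact (ae_iff).mpr h0
  set f : ℕ → ℝ × ℝ → ℂ := fun k p =>
    ((Complex.I * t) ^ k / ((Nat.factorial k) : ℂ)) * (Complex.exp (Complex.I * p.1) * (p.2 : ℂ) ^ k)
    with hfdef
  -- pointwise series expansion
  have hpt : ∀ p : ℝ × ℝ,
      Complex.exp (Complex.I * ((p.1 + p.2 * t : ℝ) : ℂ)) = ∑' k, f k p := by
    intro p
    have h1 : Complex.exp (Complex.I * (p.2 : ℂ) * t)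
        = ∑' k : ℕ, (Complex.I * (p.2 : ℂ) * t) ^ k / ((Nat.factorial k) : ℂ) := by
      rw [Complex.exp_eq_exp_ℂ, NormedSpace.exp_eq_tsum_div]
    have h2 : Complex.exp (Complex.I * ((p.1 + p.2 * t : ℝ) : ℂ))
        = Complex.exp (Complex.I * p.1) * Complex.exp (Complex.I * (p.2 : ℂ) * t) := by
      rw [← Complex.exp_add]; push_cast; ring_nf
    rw [h2, h1, ← tsum_mul_left]
    refine tsum_congr fun k => ?_
    simp only [hfdef]
    ring_nf
  have hmeas : ∀ k : ℕ, AEStronglyMeasurable (f k) fbar := by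
    intro k
    apply Continuous.aestronglyMeasurable
    fun_prop
  -- norm bound
  have hbound : ∀ k : ℕ, ∫⁻ p, ‖f k p‖₊ ∂fbar ≤ ENNReal.ofReal ((|t| * M) ^ k / (Nat.factorial k)) := by
    intro k
    have : ∀ᵐ p : ℝ × ℝ ∂fbar,
        (‖f k p‖₊ : ENNReal) ≤ ENNReal.ofReal ((|t| * M) ^ k / (Nat.factorial k)) := by
      filter_upwards [hae] with p hp
      rw [← enorm_eq_nnnorm, ← ofReal_norm]
      refine ENNReal.ofReal_le_ofReal ?_
      have hM : (0 : ℝ) ≤ M := le_trans (abs_nonneg _) hp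
      have h1 : ‖f k p‖ = |t| ^ k / (Nat.factorial k) * |p.2| ^ k := by
        simp only [hfdef, norm_mul, norm_div, norm_pow, Real.norm_eq_abs,
          Complex.norm_exp, Complex.norm_real]
        have : (Complex.I * p.1).re = 0 := by simp
        rw [this]
        simp [Complex.norm_I, Complex.norm_natCast, abs_of_nonneg (Nat.cast_nonneg ((Nat.factorial k)) : (0:ℝ) ≤ (Nat.factorial k))]
      rw [h1, mul_pow, mul_comm (|t| ^ k / ((Nat.factorial k) : ℝ)) _, mul_div_assoc]
      have : |p.2| ^ k ≤ M ^ k := pow_le_pow_left₀ (abs_nonneg _) hp k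
      have hk : (0 : ℝ) ≤ |t| ^ k / (Nat.factorial k) :=
        div_nonneg (pow_nonneg (abs_nonneg _) _) (Nat.cast_nonneg _)
      calc |p.2| ^ k * (|t| ^ k / ((Nat.factorial k) : ℝ)) ≤ M ^ k * (|t| ^ k / ((Nat.factorial k) : ℝ)) :=
            mul_le_mul_of_nonneg_right this hk
        _ = |t| ^ k * (M ^ k / ((Nat.factorial k) : ℝ)) := by ring
    calc ∫⁻ p, ‖f k p‖₊ ∂fbar
        ≤ ∫⁻ _, ENNReal.ofReal ((|t| * M) ^ k / (Nat.factorial k)) ∂fbar := lintegral_mono_ae this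
      _ = ENNReal.ofReal ((|t| * M) ^ k / (Nat.factorial k)) := by
          simp [lintegral_const]
  have hsum : (∑' k : ℕ, ∫⁻ p, ‖f k p‖₊ ∂fbar) ≠ ⊤ := by
    have hs : Summable (fun k : ℕ => (|t| * M) ^ k / ((Nat.factorial k) : ℝ)) :=
      Real.summable_pow_div_factorial _
    have hnn : ∀ k : ℕ, 0 ≤ (|t| * M) ^ k / ((Nat.factorial k) : ℝ) := by
      intro k
      rcases le_or_gt 0 (|t| * M) with h | h
      · exact div_nonneg (pow_nonneg h _) (Nat.cast_nonneg _)
      · -- if M < 0 then the measure would be zero on a full set, contradiction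
        exfalso
        have : ∃ p : ℝ × ℝ, |p.2| ≤ M := by
          by_contra hc
          push_neg at hc
          have : (∀ᵐ p : ℝ × ℝ ∂fbar, False) := by
            filter_upwards [hae] with p hp
            exact absurd hp (not_le.mpr (hc p))
          have h0 : fbar Set.univ = 0 := by
            simpa [ae_iff] using this
          simp [measure_univ] at h0
        obtain ⟨p, hp⟩ := this
        have hM : 0 ≤ M := le_trans (abs_nonneg _) hp
        nlinarith [abs_nonneg t, mul_nonneg (abs_nonneg t) hM]
    have h1 : (∑' k : ℕ, ∫⁻ p, ‖f k p‖₊ ∂fbar)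
        ≤ ENNReal.ofReal (∑' k : ℕ, (|t| * M) ^ k / ((Nat.factorial k) : ℝ)) := by
      rw [ENNReal.ofReal_tsum_of_nonneg hnn hs]
      exact ENNReal.tsum_le_tsum hbound
    exact (h1.trans_lt ENNReal.ofReal_lt_top).ne
  have hzero : ∀ k : ℕ, ∫ p, f k p ∂fbar = 0 := by
    intro k
    simp only [hfdef]
    rw [integral_const_mul, hmom k, mul_zero]
  calc ∫ p : ℝ × ℝ, Complex.exp (Complex.I * ((p.1 + p.2 * t : ℝ) : ℂ)) ∂fbar
      = ∫ p, ∑' k, f k p ∂fbar := by simp_rw [hpt]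
    _ = ∑' k, ∫ p, f k p ∂fbar := integral_tsum hmeas hsum
    _ = 0 := by simp [hzero]
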